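/- arXiv:2004.07912 — 2 statements merged into one kernel-verified Lean document; each statement's English description precedes it below -/
import Mathlib

section
/- Let d₁ and d₂ be bounded metrics on a set S, and suppose a sequence of finite covers {X^n} of S is a quasi-visual approximation of both (S,d₁) and (S,d₂). Then the identity map id : (S,d₁) → (S,d₂) is a quasisymmetric homeomorphism; moreover it can be taken to be a power quasisymmetry, i.e., with distortion function η(t) = K·max{t^α, t^{1/α}} for some K ≥ 1 and α ∈ (0,1]. -/
open Set Metric

variable {S : Type*}

/-- The distance of `x` and `y` with respect to the metric `m` on `S`. -/
noncomputable def mdist (m : MetricSpace S) (x y : S) : ℝ :=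
  letI := m; dist x y

/-- The diameter of `A ⊆ S` with respect to the metric `m` on `S`. -/
noncomputable def mdiam (m : MetricSpace S) (A : Set S) : ℝ :=
  letI := m; Metric.diam A

/-- `(S, m)` is a bounded metric space. -/
def mBounded (m : MetricSpace S) : Prop :=
  letI := m; Bornology.IsBounded (Set.univ : Set S)

/-- A distortion function: a homeomorphism `η : [0,∞) → [0,∞)`. -/
def IsGauge (η : ℝ → ℝ) : Prop :=
  η 0 = 0 ∧ StrictMonoOn η (Set.Ici 0) ∧ ContinuousOn η (Set.Ici 0) ∧
    ∀ s : ℝ, 0 ≤ s → ∃ t : ℝ, 0 ≤ t ∧ η t = s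

/-- `𝒳` is a quasi-visual approximation of `S` with respect to the metric `m`. -/
def IsQVAWith (m : MetricSpace S) (𝒳 : ℕ → Set (Set S)) : Prop :=
  (∀ n, (𝒳 n).Finite) ∧
  (∀ n, ⋃₀ 𝒳 n = Set.univ) ∧
  (𝒳 0 = {Set.univ}) ∧
  (∃ C₁ : ℝ, 1 ≤ C₁ ∧ ∀ n, ∀ X ∈ 𝒳 n, ∀ Y ∈ 𝒳 n, (X ∩ Y).Nonempty →
    mdiam m X ≤ C₁ * mdiam m Y) ∧
  (∃ c₂ : ℝ, 0 < c₂ ∧ ∀ n, ∀ X ∈ 𝒳 n, ∀ Y ∈ 𝒳 n, X ∩ Y = ∅ →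
    ∀ x ∈ X, ∀ y ∈ Y, c₂ * mdiam m X ≤ mdist m x y) ∧
  (∃ C₃ : ℝ, 1 ≤ C₃ ∧ ∀ n, ∀ X ∈ 𝒳 n, ∀ Y ∈ 𝒳 (n + 1), (X ∩ Y).Nonempty →
    mdiam m X ≤ C₃ * mdiam m Y ∧ mdiam m Y ≤ C₃ * mdiam m X) ∧
  (∃ k₀ : ℕ, 0 < k₀ ∧ ∃ lam : ℝ, 0 < lam ∧ lam < 1 ∧
    ∀ n, ∀ X ∈ 𝒳 n, ∀ Y ∈ 𝒳 (n + k₀), (X ∩ Y).Nonempty →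
    mdiam m Y ≤ lam * mdiam m X)

section Aux
variable (𝒳 : ℕ → Set (Set S))

open Classical in
noncomputable def piece (n : ℕ) (x : S) : Set S :=
  if h : ∃ X ∈ 𝒳 n, x ∈ X then h.choose else Set.univ

def lev (x y : S) : Set ℕ :=
  {n | ∃ X ∈ 𝒳 n, ∃ Y ∈ 𝒳 n, x ∈ X ∧ y ∈ Y ∧ (X ∩ Y).Nonempty}

noncomputable def lvl (x y : S) : ℕ := sSup (lev 𝒳 x y)

variable {𝒳}

lemma piece_spec (hcov : ∀ n, ⋃₀ 𝒳 n = Set.univ) (n : ℕ) (x : S) :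
    piece 𝒳 n x ∈ 𝒳 n ∧ x ∈ piece 𝒳 n x := by
  have hx : x ∈ ⋃₀ 𝒳 n := by rw [hcov n]; trivial
  obtain ⟨X, hX, hxX⟩ := hx
  have h : ∃ X ∈ 𝒳 n, x ∈ X := ⟨X, hX, hxX⟩
  rw [piece, dif_pos h]
  exact ⟨h.choose_spec.1, h.choose_spec.2⟩

lemma zero_mem_lev (h0 : 𝒳 0 = {Set.univ}) (x y : S) : 0 ∈ lev 𝒳 x y := by
  refine ⟨Set.univ, ?_, Set.univ, ?_, trivial, trivial, ⟨x, trivial, trivial⟩⟩ <;> simp [h0]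

lemma lvl_mem (h0 : 𝒳 0 = {Set.univ}) {x y : S} (hb : BddAbove (lev 𝒳 x y)) :
    lvl 𝒳 x y ∈ lev 𝒳 x y :=
  Nat.sSup_mem ⟨0, zero_mem_lev h0 x y⟩ hb

end Aux

lemma mdist_nonneg (m : MetricSpace S) (x y : S) : 0 ≤ mdist m x y := by
  letI := m; exact dist_nonneg
lemma mdist_self (m : MetricSpace S) (x : S) : mdist m x x = 0 := by
  letI := m; exact dist_self x
lemma mdist_pos (m : MetricSpace S) {x y : S} (h : x ≠ y) : 0 < mdist m x y := by
  letI := m; exact dist_pos.2 h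
lemma mdist_eq_zero (m : MetricSpace S) {x y : S} (h : mdist m x y = 0) : x = y := by
  letI := m; exact dist_eq_zero.1 h
lemma mdiam_nonneg (m : MetricSpace S) (A : Set S) : 0 ≤ mdiam m A := by
  letI := m; exact diam_nonneg


lemma master {𝒳 : ℕ → Set (Set S)} (m : MetricSpace S) (hb : mBounded m)
    (h : IsQVAWith m 𝒳) :
    ∃ Cu cl Mg ρ Cg : ℝ, 0 < Cu ∧ 0 < cl ∧ 0 < Mg ∧ 0 < ρ ∧ ρ < 1 ∧ 1 ≤ Cg ∧
      (∀ (x : S) (n k : ℕ),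
        mdiam m (piece 𝒳 (n + k) x) ≤ Mg * ρ ^ k * mdiam m (piece 𝒳 n x)) ∧
      (∀ (x : S) (n k : ℕ),
        mdiam m (piece 𝒳 n x) ≤ Cg ^ k * mdiam m (piece 𝒳 (n + k) x)) ∧
      (∀ x y : S, BddAbove (lev 𝒳 x y) →
        cl * mdiam m (piece 𝒳 (lvl 𝒳 x y) x) ≤ mdist m x y) ∧
      (∀ x y : S, ∀ n ∈ lev 𝒳 x y, mdist m x y ≤ Cu * mdiam m (piece 𝒳 n x)) ∧
      (∀ x y : S, x ≠ y → BddAbove (lev 𝒳 x y)) := by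
  letI := m
  obtain ⟨hfin, hcov, h0, ⟨C₁, hC₁, hA⟩, ⟨c₂, hc₂, hSep⟩, ⟨C₃, hC₃, hCons⟩,
    ⟨k₀, hk₀, lam, hlam0, hlam1, hDec⟩⟩ := h
  have hbU : Bornology.IsBounded (Set.univ : Set S) := hb
  have hBd : ∀ X : Set S, Bornology.IsBounded X := fun X => hbU.subset (subset_univ X)
  have hC₁0 : (0:ℝ) < C₁ := lt_of_lt_of_le one_pos hC₁
  have hC₃0 : (0:ℝ) < C₃ := lt_of_lt_of_le one_pos hC₃
  -- restate with plain diam/dist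
  have hA' : ∀ n, ∀ X ∈ 𝒳 n, ∀ Y ∈ 𝒳 n, (X ∩ Y).Nonempty → diam X ≤ C₁ * diam Y := hA
  have hSep' : ∀ n, ∀ X ∈ 𝒳 n, ∀ Y ∈ 𝒳 n, X ∩ Y = ∅ →
      ∀ x ∈ X, ∀ y ∈ Y, c₂ * diam X ≤ dist x y := hSep
  have hCons' : ∀ n, ∀ X ∈ 𝒳 n, ∀ Y ∈ 𝒳 (n + 1), (X ∩ Y).Nonempty →
      diam X ≤ C₃ * diam Y ∧ diam Y ≤ C₃ * diam X := hCons
  have hDec' : ∀ n, ∀ X ∈ 𝒳 n, ∀ Y ∈ 𝒳 (n + k₀), (X ∩ Y).Nonempty →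
      diam Y ≤ lam * diam X := hDec
  set D : ℕ → S → ℝ := fun n x => diam (piece 𝒳 n x) with hD
  have hps := fun (n : ℕ) (x : S) => piece_spec (𝒳 := 𝒳) hcov n x
  have hDnn : ∀ n x, 0 ≤ D n x := fun n x => diam_nonneg
  -- consecutive-level comparability for pieces of the same point
  have cons : ∀ (x : S) (n : ℕ), D n x ≤ C₃ * D (n+1) x ∧ D (n+1) x ≤ C₃ * D n x :=
    fun x n => hCons' n _ (hps n x).1 _ (hps (n+1) x).1 ⟨x, (hps n x).2, (hps (n+1) x).2⟩
  -- growth bound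
  have grow : ∀ (x : S) (n k : ℕ), D n x ≤ C₃ ^ k * D (n + k) x := by
    intro x n k
    induction k with
    | zero => simpa using le_refl (D n x)
    | succ k ih =>
      calc D n x ≤ C₃ ^ k * D (n + k) x := ih
        _ ≤ C₃ ^ k * (C₃ * D (n + k + 1) x) :=
            mul_le_mul_of_nonneg_left (cons x (n+k)).1 (by positivity)
        _ = C₃ ^ (k+1) * D (n + (k+1)) x := by ring_nf
  -- k₀-step decay
  have deck : ∀ (x : S) (n : ℕ), D (n + k₀) x ≤ lam * D n x :=
    fun x n => hDec' n _ (hps n x).1 _ (hps (n+k₀) x).1 ⟨x, (hps n x).2, (hps (n+k₀) x).2⟩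
  have decMul : ∀ (x : S) (n q : ℕ), D (n + k₀ * q) x ≤ lam ^ q * D n x := by
    intro x n q
    induction q with
    | zero => simpa using le_refl (D n x)
    | succ q ih =>
      have h1 : D (n + k₀ * (q+1)) x ≤ lam * D (n + k₀ * q) x := by
        have := deck x (n + k₀ * q)
        have e : n + k₀ * q + k₀ = n + k₀ * (q + 1) := by ring
        rwa [e] at this
      calc D (n + k₀ * (q+1)) x ≤ lam * D (n + k₀ * q) x := h1
        _ ≤ lam * (lam ^ q * D n x) := mul_le_mul_of_nonneg_left ih hlam0.le
        _ = lam ^ (q+1) * D n x := by ring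
  have growFin : ∀ (x : S) (n r : ℕ), D (n + r) x ≤ C₃ ^ r * D n x := by
    intro x n r
    induction r with
    | zero => simpa using le_refl (D n x)
    | succ r ih =>
      calc D (n + (r+1)) x ≤ C₃ * D (n + r) x := (cons x (n+r)).2
        _ ≤ C₃ * (C₃ ^ r * D n x) := mul_le_mul_of_nonneg_left ih hC₃0.le
        _ = C₃ ^ (r+1) * D n x := by ring
  set ρ : ℝ := lam ^ ((k₀:ℝ)⁻¹) with hρ
  have hk₀R : (0:ℝ) < (k₀:ℝ) := by exact_mod_cast hk₀
  have hρ0 : 0 < ρ := Real.rpow_pos_of_pos hlam0 _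
  have hρ1 : ρ < 1 := Real.rpow_lt_one hlam0.le hlam1 (by positivity)
  set Mg : ℝ := C₃ ^ k₀ / lam with hMg
  have hMg0 : 0 < Mg := by positivity
  have decay : ∀ (x : S) (n k : ℕ), D (n + k) x ≤ Mg * ρ ^ k * D n x := by
    intro x n k
    obtain ⟨q, r, hrk, hk⟩ : ∃ q r, r < k₀ ∧ k₀ * q + r = k :=
      ⟨k / k₀, k % k₀, Nat.mod_lt _ hk₀, Nat.div_add_mod k k₀⟩
    have step1 : D (n + k) x ≤ C₃ ^ r * D (n + k₀ * q) x := by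
      have := growFin x (n + k₀ * q) r
      have e : n + k₀ * q + r = n + k := by omega
      rwa [e] at this
    have step2 : D (n + k₀ * q) x ≤ lam ^ q * D n x := decMul x n q
    have chain : D (n + k) x ≤ C₃ ^ r * (lam ^ q * D n x) :=
      step1.trans (mul_le_mul_of_nonneg_left step2 (by positivity))
    have hr3 : (C₃:ℝ) ^ r ≤ C₃ ^ k₀ := pow_le_pow_right₀ hC₃ hrk.le
    have hqk : (k:ℝ) / (k₀:ℝ) - 1 ≤ (q:ℝ) := by
      have h' : k < k₀ * (q + 1) := by
        rw [Nat.mul_succ, ← hk]; exact Nat.add_lt_add_left hrk _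
      have h'' : (k:ℝ) < (k₀:ℝ) * ((q:ℝ) + 1) := by exact_mod_cast h'
      rw [sub_le_iff_le_add, div_le_iff₀ hk₀R]
      nlinarith
    have hlq : (lam:ℝ) ^ q ≤ lam⁻¹ * ρ ^ k := by
      have e1 : (lam:ℝ) ^ q = lam ^ (q:ℝ) := (Real.rpow_natCast _ _).symm
      have e2 : lam ^ (q:ℝ) ≤ lam ^ ((k:ℝ)/(k₀:ℝ) - 1) :=
        Real.rpow_le_rpow_of_exponent_ge hlam0 hlam1.le hqk
      have e3 : lam ^ ((k:ℝ)/(k₀:ℝ) - 1) = lam⁻¹ * ρ ^ k := by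
        rw [Real.rpow_sub hlam0, Real.rpow_one]
        have : lam ^ ((k:ℝ)/(k₀:ℝ)) = ρ ^ k := by
          rw [hρ, ← Real.rpow_natCast (lam ^ ((k₀:ℝ)⁻¹)) k, ← Real.rpow_mul hlam0.le]
          congr 1
          field_simp
        rw [this]
        ring
      rw [e1]; rw [e3] at e2; exact e2
    calc D (n + k) x ≤ C₃ ^ r * (lam ^ q * D n x) := chain
      _ ≤ C₃ ^ k₀ * (lam ^ q * D n x) := by
          apply mul_le_mul_of_nonneg_right hr3
          have := hDnn n x
          positivity
      _ ≤ C₃ ^ k₀ * ((lam⁻¹ * ρ ^ k) * D n x) := by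
          apply mul_le_mul_of_nonneg_left _ (by positivity)
          exact mul_le_mul_of_nonneg_right hlq (hDnn n x)
      _ = Mg * ρ ^ k * D n x := by rw [hMg]; field_simp
  -- upper bound on distance at any adjacency level
  set Cu : ℝ := (1 + C₁) * C₁ with hCu
  have hCu0 : 0 < Cu := by positivity
  have upper : ∀ x y : S, ∀ n ∈ lev 𝒳 x y, dist x y ≤ Cu * D n x := by
    intro x y n hn
    obtain ⟨X, hX, Y, hY, hxX, hyY, w, hwX, hwY⟩ := hn
    have h1 : dist x y ≤ diam X + diam Y :=
      (dist_triangle x w y).trans (add_le_add (dist_le_diam_of_mem (hBd X) hxX hwX)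
        (dist_le_diam_of_mem (hBd Y) hwY hyY))
    have h2 : diam Y ≤ C₁ * diam X := hA' n Y hY X hX ⟨w, hwY, hwX⟩
    have h3 : diam X ≤ C₁ * D n x := hA' n X hX _ (hps n x).1 ⟨x, hxX, (hps n x).2⟩
    have hdX : 0 ≤ diam X := diam_nonneg
    calc dist x y ≤ diam X + diam Y := h1
      _ ≤ (1 + C₁) * diam X := by nlinarith
      _ ≤ Cu * D n x := by rw [hCu, mul_assoc]; exact mul_le_mul_of_nonneg_left h3 (by positivity)
  -- boundedness of adjacency levels
  have bdd : ∀ x y : S, x ≠ y → BddAbove (lev 𝒳 x y) := by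
    intro x y hxy
    have hd0 : 0 < dist x y := dist_pos.2 hxy
    set A : ℝ := Cu * (Mg * diam (Set.univ : Set S))
    have hA0 : 0 ≤ A := by
      have : (0:ℝ) ≤ diam (Set.univ : Set S) := diam_nonneg
      positivity
    have hdn : ∀ n, n ∈ lev 𝒳 x y → dist x y ≤ A * ρ ^ n := by
      intro n hn
      have h1 : dist x y ≤ Cu * D n x := upper x y n hn
      have h2 : D n x ≤ Mg * ρ ^ n * D 0 x := by
        have := decay x 0 n; simpa using this
      have h3 : D 0 x ≤ diam (Set.univ : Set S) := diam_mono (subset_univ _) hbU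
      have : D n x ≤ Mg * ρ ^ n * diam (Set.univ : Set S) :=
        h2.trans (mul_le_mul_of_nonneg_left h3 (by positivity))
      calc dist x y ≤ Cu * D n x := h1
        _ ≤ Cu * (Mg * ρ ^ n * diam (Set.univ : Set S)) :=
            mul_le_mul_of_nonneg_left this hCu0.le
        _ = A * ρ ^ n := by ring
    obtain ⟨n₁, hn₁⟩ := exists_pow_lt_of_lt_one (div_pos hd0 (by linarith : (0:ℝ) < A + 1)) hρ1
    refine ⟨n₁, fun n hn => ?_⟩
    by_contra hcon
    push_neg at hcon
    have hle : ρ ^ n ≤ ρ ^ n₁ := pow_le_pow_of_le_one hρ0.le hρ1.le hcon.le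
    have h4 : dist x y ≤ A * ρ ^ n₁ := (hdn n hn).trans (mul_le_mul_of_nonneg_left hle hA0)
    have hu0 : 0 < dist x y / (A + 1) := div_pos hd0 (by linarith)
    have hu : dist x y / (A + 1) * (A + 1) = dist x y := div_mul_cancel₀ _ (by linarith)
    have h5 : dist x y ≤ A * (dist x y / (A + 1)) :=
      h4.trans (mul_le_mul_of_nonneg_left hn₁.le hA0)
    nlinarith
  -- lower bound at the critical level
  set cl : ℝ := c₂ / C₃ with hcl
  have hcl0 : 0 < cl := by positivity
  have lower : ∀ x y : S, BddAbove (lev 𝒳 x y) → cl * D (lvl 𝒳 x y) x ≤ dist x y := by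
    intro x y hbdd
    set N := lvl 𝒳 x y with hN
    have hnot : N + 1 ∉ lev 𝒳 x y := by
      intro hmem
      have := le_csSup hbdd hmem
      simp only [hN, lvl] at *
      omega
    have hdisj : piece 𝒳 (N+1) x ∩ piece 𝒳 (N+1) y = ∅ := by
      rw [← Set.not_nonempty_iff_eq_empty]
      intro hne
      exact hnot ⟨_, (hps (N+1) x).1, _, (hps (N+1) y).1, (hps (N+1) x).2, (hps (N+1) y).2, hne⟩
    have h1 : c₂ * D (N+1) x ≤ dist x y :=
      hSep' (N+1) _ (hps (N+1) x).1 _ (hps (N+1) y).1 hdisj x (hps (N+1) x).2 y (hps (N+1) y).2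
    have h2 : D N x ≤ C₃ * D (N+1) x := (cons x N).1
    calc cl * D N x ≤ cl * (C₃ * D (N+1) x) := mul_le_mul_of_nonneg_left h2 hcl0.le
      _ = c₂ * D (N+1) x := by rw [hcl]; field_simp
      _ ≤ dist x y := h1
  exact ⟨Cu, cl, Mg, ρ, C₃, hCu0, hcl0, hMg0, hρ0, hρ1, hC₃, decay, grow, lower, upper, bdd⟩

lemma arith {a b ρ E β : ℝ} (ha : 0 < a) (hb : 0 < b) (hρ : 0 ≤ ρ) (hE : 0 ≤ E)
    (hβ : 0 < β) (hρb : ρ ≤ b ^ β) :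
    ∀ (k : ℕ) (t : ℝ), 0 < t → a * b ^ k ≤ t →
      E * ρ ^ k ≤ (E * a ^ (-β) + 1) * t ^ β := by
  intro k t ht hle
  have h1 : b ^ k ≤ t / a := (le_div_iff₀ ha).2 (by linarith [hle, mul_comm a (b ^ k)])
  have h2 : ρ ^ k ≤ (b ^ β) ^ k := pow_le_pow_left₀ hρ hρb k
  have h3 : ((b:ℝ) ^ β) ^ k = (b ^ k) ^ β := by
    rw [← Real.rpow_natCast (b ^ β) k, ← Real.rpow_natCast b k,
      ← Real.rpow_mul hb.le, ← Real.rpow_mul hb.le, mul_comm]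
  have h4 : ((b:ℝ) ^ k) ^ β ≤ (t / a) ^ β :=
    Real.rpow_le_rpow (by positivity) h1 hβ.le
  have h5 : (t / a) ^ β = t ^ β * a ^ (-β) := by
    rw [div_eq_mul_inv, Real.mul_rpow ht.le (by positivity), Real.inv_rpow ha.le,
      ← Real.rpow_neg ha.le]
  have h6 : ρ ^ k ≤ t ^ β * a ^ (-β) := by
    rw [← h5]; exact (h2.trans (h3 ▸ h4))
  have htβ : 0 < t ^ β := Real.rpow_pos_of_pos ht β
  calc E * ρ ^ k ≤ E * (t ^ β * a ^ (-β)) := mul_le_mul_of_nonneg_left h6 hE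
    _ = (E * a ^ (-β)) * t ^ β := by ring
    _ ≤ (E * a ^ (-β) + 1) * t ^ β := by nlinarith
lemma exists_beta_lt {b ρ : ℝ} (hb0 : 0 < b) (hb1 : b ≤ 1) (hρ0 : 0 < ρ) (hρ1 : ρ < 1) :
    ∃ β : ℝ, 0 < β ∧ ρ ≤ b ^ β := by
  rcases eq_or_lt_of_le hb1 with h | h
  · exact ⟨1, one_pos, by rw [h, Real.one_rpow]; linarith⟩
  · refine ⟨Real.log ρ / Real.log b, ?_, ?_⟩
    · have h1 : Real.log ρ < 0 := Real.log_neg hρ0 hρ1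
      have h2 : Real.log b < 0 := Real.log_neg hb0 h
      exact div_pos_of_neg_of_neg h1 h2
    · have h2 : Real.log b ≠ 0 := ne_of_lt (Real.log_neg hb0 h)
      rw [Real.rpow_def_of_pos hb0, mul_div_cancel₀ _ h2, Real.exp_log hρ0]

lemma exists_beta_ge {b ρ : ℝ} (hb : 1 < b) (hρ : 1 ≤ ρ) :
    ∃ β : ℝ, 0 < β ∧ ρ ≤ b ^ β := by
  refine ⟨max 1 (Real.log ρ / Real.log b), lt_of_lt_of_le one_pos (le_max_left _ _), ?_⟩
  have hρ0 : (0:ℝ) < ρ := lt_of_lt_of_le one_pos hρ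
  have h2 : Real.log b ≠ 0 := ne_of_gt (Real.log_pos hb)
  have e : b ^ (Real.log ρ / Real.log b) = ρ := by
    rw [Real.rpow_def_of_pos (lt_trans one_pos hb), mul_div_cancel₀ _ h2, Real.exp_log hρ0]
  calc ρ = b ^ (Real.log ρ / Real.log b) := e.symm
    _ ≤ b ^ (max 1 (Real.log ρ / Real.log b)) :=
        Real.rpow_le_rpow_of_exponent_le hb.le (le_max_right _ _)

lemma pow_le_max {α β t : ℝ} (hα0 : 0 < α) (hαβ : α ≤ β) (hβα : β ≤ α⁻¹) (ht : 0 < t) :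
    t ^ β ≤ max (t ^ α) (t ^ α⁻¹) := by
  rcases le_total t 1 with h | h
  · exact le_max_of_le_left (Real.rpow_le_rpow_of_exponent_ge ht h hαβ)
  · exact le_max_of_le_right (Real.rpow_le_rpow_of_exponent_le h hβα)

theorem stmt6 (m₁ m₂ : MetricSpace S)
    (hb₁ : mBounded m₁) (hb₂ : mBounded m₂)
    (𝒳 : ℕ → Set (Set S))
    (h₁ : IsQVAWith m₁ 𝒳) (h₂ : IsQVAWith m₂ 𝒳) :
    -- the identity map `id : (S, m₁) → (S, m₂)` is a power quasisymmetry,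
    -- i.e., a quasisymmetry with distortion function
    -- `η(t) = K * max (t ^ α) (t ^ (1/α))` for some `K ≥ 1` and `α ∈ (0,1]`
    ∃ K : ℝ, 1 ≤ K ∧ ∃ α : ℝ, 0 < α ∧ α ≤ 1 ∧
      ∀ t : ℝ, 0 < t → ∀ x y z : S,
        mdist m₁ x y ≤ t * mdist m₁ x z →
        mdist m₂ x y ≤ (K * max (t ^ α) (t ^ α⁻¹)) * mdist m₂ x z := by
  obtain ⟨Cu₁, cl₁, Mg₁, ρ₁, Cg₁, hCu₁, hcl₁, hMg₁, hρ₁0, hρ₁1, hCg₁,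
    hdec₁, hgrow₁, hlow₁, hup₁, hbdd₁⟩ := master m₁ hb₁ h₁
  obtain ⟨Cu₂, cl₂, Mg₂, ρ₂, Cg₂, hCu₂, hcl₂, hMg₂, hρ₂0, hρ₂1, hCg₂,
    hdec₂, hgrow₂, hlow₂, hup₂, _⟩ := master m₂ hb₂ h₂
  have h0 : 𝒳 0 = {Set.univ} := h₁.2.2.1
  have hCg₁0 : (0:ℝ) < Cg₁ := lt_of_lt_of_le one_pos hCg₁
  obtain ⟨β₁, hβ₁, hρb₁⟩ :=
    exists_beta_lt (b := Cg₁⁻¹) (ρ := ρ₂) (by positivity) (inv_le_one_of_one_le₀ hCg₁) hρ₂0 hρ₂1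
  obtain ⟨β₂, hβ₂, hρb₂⟩ :=
    exists_beta_ge (b := ρ₁⁻¹) (ρ := Cg₂) ((one_lt_inv₀ hρ₁0).2 hρ₁1) hCg₂
  set a₁ : ℝ := cl₁ / Cu₁ with ha₁
  set E₁ : ℝ := Cu₂ * Mg₂ / cl₂ with hE₁
  set a₂ : ℝ := cl₁ / (Cu₁ * Mg₁) with ha₂
  set E₂ : ℝ := Cu₂ / cl₂ with hE₂
  have ha₁0 : 0 < a₁ := by positivity
  have ha₂0 : 0 < a₂ := by positivity
  have hE₁0 : 0 ≤ E₁ := by positivity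
  have hE₂0 : 0 ≤ E₂ := by positivity
  set K₁ : ℝ := E₁ * a₁ ^ (-β₁) + 1 with hK₁
  set K₂ : ℝ := E₂ * a₂ ^ (-β₂) + 1 with hK₂
  have hK₁0 : 0 < K₁ := by
    have : (0:ℝ) < a₁ ^ (-β₁) := Real.rpow_pos_of_pos ha₁0 _
    nlinarith
  have hK₂0 : 0 < K₂ := by
    have : (0:ℝ) < a₂ ^ (-β₂) := Real.rpow_pos_of_pos ha₂0 _
    nlinarith
  set K : ℝ := max 1 (max K₁ K₂) with hK
  set α : ℝ := min 1 (min (min β₁ β₁⁻¹) (min β₂ β₂⁻¹)) with hα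
  have hα0 : 0 < α := by
    simp only [hα, lt_min_iff]
    exact ⟨one_pos, ⟨hβ₁, by positivity⟩, ⟨hβ₂, by positivity⟩⟩
  have hα1 : α ≤ 1 := min_le_left _ _
  have hαβ₁ : α ≤ β₁ :=
    ((min_le_right _ _).trans (min_le_left _ _)).trans (min_le_left _ _)
  have hαβ₁' : α ≤ β₁⁻¹ :=
    ((min_le_right _ _).trans (min_le_left _ _)).trans (min_le_right _ _)
  have hαβ₂ : α ≤ β₂ :=
    ((min_le_right _ _).trans (min_le_right _ _)).trans (min_le_left _ _)
  have hαβ₂' : α ≤ β₂⁻¹ :=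
    ((min_le_right _ _).trans (min_le_right _ _)).trans (min_le_right _ _)
  have hβ₁α : β₁ ≤ α⁻¹ := by
    have := inv_anti₀ hα0 hαβ₁'
    rwa [inv_inv] at this
  have hβ₂α : β₂ ≤ α⁻¹ := by
    have := inv_anti₀ hα0 hαβ₂'
    rwa [inv_inv] at this
  have hK1 : (1:ℝ) ≤ K := le_max_left _ _
  have hK₁K : K₁ ≤ K := (le_max_left K₁ K₂).trans (le_max_right _ _)
  have hK₂K : K₂ ≤ K := (le_max_right K₁ K₂).trans (le_max_right _ _)
  refine ⟨K, hK1, α, hα0, hα1, ?_⟩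
  intro t ht x y z hyp
  have hmax0 : 0 ≤ max (t ^ α) (t ^ α⁻¹) :=
    le_max_of_le_left (Real.rpow_nonneg ht.le α)
  by_cases hxy : x = y
  · subst hxy
    rw [mdist_self]
    exact mul_nonneg (mul_nonneg (by linarith) hmax0) (mdist_nonneg m₂ x z)
  by_cases hxz : x = z
  · subst hxz
    rw [mdist_self, mul_zero] at hyp
    exact absurd (mdist_eq_zero m₁ (le_antisymm hyp (mdist_nonneg m₁ x y))) hxy
  -- main case
  set p : ℕ := lvl 𝒳 x z with hp
  set q : ℕ := lvl 𝒳 x y with hq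
  have hbxy := hbdd₁ x y hxy
  have hbxz := hbdd₁ x z hxz
  have hqmem : q ∈ lev 𝒳 x y := lvl_mem h0 hbxy
  have hpmem : p ∈ lev 𝒳 x z := lvl_mem h0 hbxz
  have low1y : cl₁ * mdiam m₁ (piece 𝒳 q x) ≤ mdist m₁ x y := hlow₁ x y hbxy
  have up1z : mdist m₁ x z ≤ Cu₁ * mdiam m₁ (piece 𝒳 p x) := hup₁ x z p hpmem
  have up1y : mdist m₁ x y ≤ Cu₁ * mdiam m₁ (piece 𝒳 q x) := hup₁ x y q hqmem
  have low2z : cl₂ * mdiam m₂ (piece 𝒳 p x) ≤ mdist m₂ x z := hlow₂ x z hbxz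
  have up2y : mdist m₂ x y ≤ Cu₂ * mdiam m₂ (piece 𝒳 q x) := hup₂ x y q hqmem
  have hdy1 : 0 < mdist m₁ x y := mdist_pos m₁ hxy
  have hDq1nn : 0 ≤ mdiam m₁ (piece 𝒳 q x) := mdiam_nonneg _ _
  have hDp1nn : 0 ≤ mdiam m₁ (piece 𝒳 p x) := mdiam_nonneg _ _
  have hDq2nn : 0 ≤ mdiam m₂ (piece 𝒳 q x) := mdiam_nonneg _ _
  have hDp2nn : 0 ≤ mdiam m₂ (piece 𝒳 p x) := mdiam_nonneg _ _
  have hDq1 : 0 < mdiam m₁ (piece 𝒳 q x) := by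
    rcases lt_or_eq_of_le hDq1nn with h | h
    · exact h
    · exfalso; rw [← h, mul_zero] at up1y; linarith
  have key1 : cl₁ * mdiam m₁ (piece 𝒳 q x) ≤ t * (Cu₁ * mdiam m₁ (piece 𝒳 p x)) :=
    low1y.trans (hyp.trans (mul_le_mul_of_nonneg_left up1z ht.le))
  have hcl₂Dp : 0 ≤ cl₂ * mdiam m₂ (piece 𝒳 p x) := mul_nonneg hcl₂.le hDp2nn
  rcases le_or_gt p q with hpq | hpq
  · -- q ≥ p
    obtain ⟨k, hk⟩ : ∃ k, p + k = q := ⟨q - p, by omega⟩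
    have growpq : mdiam m₁ (piece 𝒳 p x) ≤ Cg₁ ^ k * mdiam m₁ (piece 𝒳 q x) := by
      have := hgrow₁ x p k; rwa [hk] at this
    have h2 : cl₁ ≤ t * Cu₁ * Cg₁ ^ k := by
      have hA : cl₁ * mdiam m₁ (piece 𝒳 q x)
          ≤ (t * Cu₁ * Cg₁ ^ k) * mdiam m₁ (piece 𝒳 q x) := by
        have := key1.trans (mul_le_mul_of_nonneg_left
          (mul_le_mul_of_nonneg_left growpq hCu₁.le) ht.le)
        linarith only [this]
      exact le_of_mul_le_mul_right hA hDq1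
    have habk : a₁ * (Cg₁⁻¹) ^ k ≤ t := by
      rw [inv_pow]
      have e : a₁ * (Cg₁ ^ k)⁻¹ = cl₁ / (Cu₁ * Cg₁ ^ k) := by
        rw [ha₁]; field_simp
      rw [e, div_le_iff₀ (by positivity)]
      linarith only [h2]
    have harith := arith ha₁0 (by positivity : (0:ℝ) < Cg₁⁻¹) hρ₂0.le hE₁0 hβ₁ hρb₁
      k t ht habk
    have dec2 : mdiam m₂ (piece 𝒳 q x) ≤ Mg₂ * ρ₂ ^ k * mdiam m₂ (piece 𝒳 p x) := by
      have := hdec₂ x p k; rwa [hk] at this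
    calc mdist m₂ x y ≤ Cu₂ * mdiam m₂ (piece 𝒳 q x) := up2y
      _ ≤ Cu₂ * (Mg₂ * ρ₂ ^ k * mdiam m₂ (piece 𝒳 p x)) :=
          mul_le_mul_of_nonneg_left dec2 hCu₂.le
      _ = (E₁ * ρ₂ ^ k) * (cl₂ * mdiam m₂ (piece 𝒳 p x)) := by
          rw [hE₁]; field_simp
      _ ≤ (K₁ * t ^ β₁) * (cl₂ * mdiam m₂ (piece 𝒳 p x)) :=
          mul_le_mul_of_nonneg_right harith hcl₂Dp
      _ ≤ (K₁ * t ^ β₁) * mdist m₂ x z := by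
          apply mul_le_mul_of_nonneg_left low2z
          have : (0:ℝ) < t ^ β₁ := Real.rpow_pos_of_pos ht _
          positivity
      _ ≤ (K * max (t ^ α) (t ^ α⁻¹)) * mdist m₂ x z := by
          apply mul_le_mul_of_nonneg_right _ (mdist_nonneg m₂ x z)
          exact mul_le_mul hK₁K (pow_le_max hα0 hαβ₁ hβ₁α ht)
            (Real.rpow_nonneg ht.le _) (by linarith)
  · -- q < p
    obtain ⟨k, hk⟩ : ∃ k, q + k = p := ⟨p - q, by omega⟩
    have dec1 : mdiam m₁ (piece 𝒳 p x) ≤ Mg₁ * ρ₁ ^ k * mdiam m₁ (piece 𝒳 q x) := by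
      have := hdec₁ x q k; rwa [hk] at this
    have h2 : cl₁ ≤ t * Cu₁ * Mg₁ * ρ₁ ^ k := by
      have hA : cl₁ * mdiam m₁ (piece 𝒳 q x)
          ≤ (t * Cu₁ * Mg₁ * ρ₁ ^ k) * mdiam m₁ (piece 𝒳 q x) := by
        have := key1.trans (mul_le_mul_of_nonneg_left
          (mul_le_mul_of_nonneg_left dec1 hCu₁.le) ht.le)
        linarith only [this]
      exact le_of_mul_le_mul_right hA hDq1
    have habk : a₂ * (ρ₁⁻¹) ^ k ≤ t := by
      rw [inv_pow]
      have e : a₂ * (ρ₁ ^ k)⁻¹ = cl₁ / (Cu₁ * Mg₁ * ρ₁ ^ k) := by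
        rw [ha₂]; field_simp
      rw [e, div_le_iff₀ (by positivity)]
      linarith only [h2]
    have harith := arith ha₂0 (by positivity : (0:ℝ) < ρ₁⁻¹)
      (by linarith : (0:ℝ) ≤ Cg₂) hE₂0 hβ₂ hρb₂ k t ht habk
    have grow2 : mdiam m₂ (piece 𝒳 q x) ≤ Cg₂ ^ k * mdiam m₂ (piece 𝒳 p x) := by
      have := hgrow₂ x q k; rwa [hk] at this
    calc mdist m₂ x y ≤ Cu₂ * mdiam m₂ (piece 𝒳 q x) := up2y
      _ ≤ Cu₂ * (Cg₂ ^ k * mdiam m₂ (piece 𝒳 p x)) :=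
          mul_le_mul_of_nonneg_left grow2 hCu₂.le
      _ = (E₂ * Cg₂ ^ k) * (cl₂ * mdiam m₂ (piece 𝒳 p x)) := by
          rw [hE₂]; field_simp
      _ ≤ (K₂ * t ^ β₂) * (cl₂ * mdiam m₂ (piece 𝒳 p x)) :=
          mul_le_mul_of_nonneg_right harith hcl₂Dp
      _ ≤ (K₂ * t ^ β₂) * mdist m₂ x z := by
          apply mul_le_mul_of_nonneg_left low2z
          have : (0:ℝ) < t ^ β₂ := Real.rpow_pos_of_pos ht _
          positivity
      _ ≤ (K * max (t ^ α) (t ^ α⁻¹)) * mdist m₂ x z := by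
          apply mul_le_mul_of_nonneg_right _ (mdist_nonneg m₂ x z)
          exact mul_le_mul hK₂K (pow_le_max hα0 hαβ₂ hβ₂α ht)
            (Real.rpow_nonneg ht.le _) (by linarith)
end

section
/- If F : T → T' is a quasisymmetry between metric trees and T has uniformly relatively separated branch points (i.e., |p−q| ≳ min{H_T(p), H_T(q)} for all distinct branch points p,q), then T' also has uniformly relatively separated branch points. Similarly, if T has uniformly relatively dense branch points (i.e., for all distinct x,y ∈ T there is a branch point p ∈ [x,y] with H_T(p) ≳ |x−y|), then so does T'. -/
/-- `A` is a (possibly degenerate) arc in `X` with endpoints `x` and `y`. -/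
def IsArc {X : Type*} [TopologicalSpace X] (A : Set X) (x y : X) : Prop :=
  (x = y ∧ A = {x}) ∨
  (x ≠ y ∧ ∃ f : ℝ → X, ContinuousOn f (Set.Icc 0 1) ∧ Set.InjOn f (Set.Icc 0 1) ∧
    f 0 = x ∧ f 1 = y ∧ A = f '' Set.Icc 0 1)

/-- A metric tree: a compact, connected, locally connected metric space with at
least two points in which any two points are joined by a unique arc. -/
structure IsMetricTree (T : Type*) [MetricSpace T] : Prop where
  compact : CompactSpace T
  conn : ConnectedSpace T
  locConn : LocallyConnectedSpace T
  nontriv : Nontrivial T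
  arcUnique : ∀ x y : T, ∃! A : Set T, IsArc A x y

/-- The unique arc `[x,y]` joining `x` and `y` in the metric tree `T`. -/
noncomputable def treeArc {T : Type*} [MetricSpace T] (h : IsMetricTree T) (x y : T) :
    Set T :=
  (h.arcUnique x y).choose

/-- `B` is a branch of `p` in the subset `S`, i.e., the closure of a connected
component of `S \ {p}`. -/
def IsBranchIn {X : Type*} [TopologicalSpace X] (S : Set X) (p : X) (B : Set X) : Prop :=
  ∃ q ∈ S \ {p}, B = closure (connectedComponentIn (S \ {p}) q)

/-- `B` is a branch of `p` in the whole space, i.e., the closure of a connected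
component of the complement of `{p}`. -/
def IsBranch {X : Type*} [TopologicalSpace X] (p : X) (B : Set X) : Prop :=
  IsBranchIn Set.univ p B

/-- `p` is a branch point of the subset `S`: `p` has at least three distinct
branches in `S`. -/
def IsBranchPointIn {X : Type*} [TopologicalSpace X] (S : Set X) (p : X) : Prop :=
  ∃ B₁ B₂ B₃ : Set X, IsBranchIn S p B₁ ∧ IsBranchIn S p B₂ ∧ IsBranchIn S p B₃ ∧
    B₁ ≠ B₂ ∧ B₁ ≠ B₃ ∧ B₂ ≠ B₃

/-- `p` is a branch point: `p` has at least three distinct branches. -/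
def IsBranchPoint {X : Type*} [TopologicalSpace X] (p : X) : Prop :=
  IsBranchPointIn Set.univ p

/-- The height `H_S(p)` of `p` in the subset `S`: the diameter of the third
largest branch of `p` in `S`, realized as the supremum of
`min (diam B₁) (min (diam B₂) (diam B₃))` over triples of distinct branches. -/
noncomputable def heightIn {X : Type*} [MetricSpace X] (S : Set X) (p : X) : ℝ :=
  sSup {r : ℝ | ∃ B₁ B₂ B₃ : Set X, IsBranchIn S p B₁ ∧ IsBranchIn S p B₂ ∧
    IsBranchIn S p B₃ ∧ B₁ ≠ B₂ ∧ B₁ ≠ B₃ ∧ B₂ ≠ B₃ ∧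
    r = min (Metric.diam B₁) (min (Metric.diam B₂) (Metric.diam B₃))}

/-- The height `H_T(p)` of `p` in the whole tree. -/
noncomputable def treeHeight {X : Type*} [MetricSpace X] (p : X) : ℝ :=
  heightIn Set.univ p

/-- A subtree of a metric tree: a closed connected subset with at least
two points. -/
def IsSubtree {X : Type*} [TopologicalSpace X] (S : Set X) : Prop :=
  IsClosed S ∧ IsConnected S ∧ S.Nontrivial

/-- The tree `T` has uniformly relatively dense branch points. -/
def UnifRelDense {T : Type*} [MetricSpace T] (hT : IsMetricTree T) : Prop :=
  ∃ C : ℝ, 1 ≤ C ∧ ∀ x y : T, x ≠ y → ∃ p ∈ treeArc hT x y,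
    IsBranchPoint p ∧ dist x y / C ≤ treeHeight p

/-- The tree `T` has uniformly relatively separated branch points. -/
def UnifRelSep (T : Type*) [MetricSpace T] : Prop :=
  ∃ C : ℝ, 1 ≤ C ∧ ∀ p q : T, IsBranchPoint p → IsBranchPoint q → p ≠ q →
    min (treeHeight p) (treeHeight q) / C ≤ dist p q

/-! ### Auxiliary lemmas -/

section Gauge

theorem IsGauge.pos {η : ℝ → ℝ} (hη : IsGauge η) {t : ℝ} (ht : 0 < t) : 0 < η t := by
  have := hη.2.1 (Set.self_mem_Ici) (Set.mem_Ici.mpr ht.le) ht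
  rwa [hη.1] at this

theorem IsGauge.nonneg {η : ℝ → ℝ} (hη : IsGauge η) {t : ℝ} (ht : 0 ≤ t) : 0 ≤ η t := by
  rcases ht.eq_or_lt with h | h
  · rw [← h, hη.1]
  · exact (hη.pos h).le

end Gauge

section Branches

variable {X Y : Type*} [TopologicalSpace X] [TopologicalSpace Y]

theorem homeomorph_image_univ_diff_singleton (h : X ≃ₜ Y) (p : X) :
    h '' (Set.univ \ {p}) = Set.univ \ {h p} := by
  ext z
  simp only [Set.mem_image, Set.mem_diff, Set.mem_univ, Set.mem_singleton_iff, true_and]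
  constructor
  · rintro ⟨w, hw, rfl⟩
    exact fun e => hw (h.injective e)
  · intro hz
    exact ⟨h.symm z, fun e => hz (by rw [← e, h.apply_symm_apply]), h.apply_symm_apply z⟩

theorem IsBranch.image (h : X ≃ₜ Y) {p : X} {B : Set X}
    (hB : IsBranch p B) : IsBranch (h p) (h '' B) := by
  obtain ⟨q, hq, rfl⟩ := hB
  refine ⟨h q, ⟨trivial, fun e => hq.2 (h.injective e)⟩, ?_⟩
  rw [h.image_closure, h.image_connectedComponentIn hq, homeomorph_image_univ_diff_singleton h p]

theorem IsBranchPoint.image (h : X ≃ₜ Y) {p : X} (hp : IsBranchPoint p) :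
    IsBranchPoint (h p) := by
  obtain ⟨B₁, B₂, B₃, h1, h2, h3, h12, h13, h23⟩ := hp
  have hinj := Set.image_injective.mpr h.injective
  exact ⟨h '' B₁, h '' B₂, h '' B₃, IsBranch.image h h1, IsBranch.image h h2,
    IsBranch.image h h3, fun e => h12 (hinj e), fun e => h13 (hinj e), fun e => h23 (hinj e)⟩

theorem IsBranch.mem_self [ConnectedSpace X] [LocallyConnectedSpace X] [T1Space X]
    {p : X} {B : Set X} (hB : IsBranch p B) : p ∈ B := by
  obtain ⟨q, hq, rfl⟩ := hB
  by_contra hp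
  set K := connectedComponentIn (Set.univ \ {p}) q with hK
  have hqK : q ∈ K := mem_connectedComponentIn hq
  have hopen : IsOpen K := by
    have : (Set.univ \ {p} : Set X) = {p}ᶜ := by
      ext z; simp
    rw [hK, this]
    exact IsOpen.connectedComponentIn isOpen_compl_singleton
  have hclK : closure K ⊆ Set.univ \ {p} := by
    intro z hz
    refine ⟨trivial, ?_⟩
    intro hzp
    rw [Set.mem_singleton_iff] at hzp
    exact hp (hzp ▸ hz)
  have hsub : closure K ⊆ K :=
    (isPreconnected_connectedComponentIn.closure).subset_connectedComponentIn
      (subset_closure hqK) hclK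
  have hcl : IsClosed K := isClosed_of_closure_subset hsub
  have huniv : K = Set.univ := (IsClopen.eq_univ ⟨hcl, hopen⟩ ⟨q, hqK⟩)
  have : p ∈ K := huniv ▸ Set.mem_univ p
  exact ((connectedComponentIn_subset _ _) this).2 rfl

end Branches

section Height

variable {X : Type*} [MetricSpace X]

theorem heightIn_univ_le {p : X} {M : ℝ} (hM : 0 ≤ M)
    (h : ∀ B₁ B₂ B₃ : Set X, IsBranch p B₁ → IsBranch p B₂ → IsBranch p B₃ →
      B₁ ≠ B₂ → B₁ ≠ B₃ → B₂ ≠ B₃ →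
      min (Metric.diam B₁) (min (Metric.diam B₂) (Metric.diam B₃)) ≤ M) :
    heightIn Set.univ p ≤ M := by
  apply Real.sSup_le _ hM
  rintro r ⟨B₁, B₂, B₃, h1, h2, h3, h12, h13, h23, rfl⟩
  exact h B₁ B₂ B₃ h1 h2 h3 h12 h13 h23

theorem bddAbove_heightSet [CompactSpace X] (p : X) :
    BddAbove {r : ℝ | ∃ B₁ B₂ B₃ : Set X, IsBranchIn Set.univ p B₁ ∧
      IsBranchIn Set.univ p B₂ ∧ IsBranchIn Set.univ p B₃ ∧ B₁ ≠ B₂ ∧ B₁ ≠ B₃ ∧ B₂ ≠ B₃ ∧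
      r = min (Metric.diam B₁) (min (Metric.diam B₂) (Metric.diam B₃))} := by
  refine ⟨Metric.diam (Set.univ : Set X), ?_⟩
  rintro r ⟨B₁, B₂, B₃, _, _, _, _, _, _, rfl⟩
  exact (min_le_left _ _).trans (Metric.diam_mono (Set.subset_univ _) Metric.isBounded_of_compactSpace)

theorem le_heightIn_univ [CompactSpace X] {p : X} {B₁ B₂ B₃ : Set X}
    (h1 : IsBranch p B₁) (h2 : IsBranch p B₂) (h3 : IsBranch p B₃)
    (h12 : B₁ ≠ B₂) (h13 : B₁ ≠ B₃) (h23 : B₂ ≠ B₃) :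
    min (Metric.diam B₁) (min (Metric.diam B₂) (Metric.diam B₃)) ≤ heightIn Set.univ p :=
  le_csSup (bddAbove_heightSet p) ⟨B₁, B₂, B₃, h1, h2, h3, h12, h13, h23, rfl⟩

theorem heightIn_univ_le_diam [CompactSpace X] (p : X) :
    heightIn Set.univ p ≤ Metric.diam (Set.univ : Set X) :=
  heightIn_univ_le Metric.diam_nonneg fun B₁ _ _ _ _ _ _ _ _ =>
    (min_le_left _ _).trans (Metric.diam_mono (Set.subset_univ _) Metric.isBounded_of_compactSpace)

/-- Key transfer lemma: if all points of a small ball-like set around `p` are mapped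
`M`-close to the image of `p` (relative to a reference point `c`), then a height bound
at `p` transfers to a height bound at `h p`. -/
theorem height_transfer {Y : Type*} [MetricSpace Y] [CompactSpace X] [CompactSpace Y]
    [ConnectedSpace X] [LocallyConnectedSpace X]
    (h : X ≃ₜ Y) (p c : X) (K M : ℝ) (hM : 0 ≤ M)
    (himp : ∀ x : X, dist p x ≤ K * dist p c → dist (h p) (h x) ≤ M * dist (h p) (h c))
    (hH : heightIn Set.univ p ≤ K * dist p c) :
    heightIn Set.univ (h p) ≤ 2 * (M * dist (h p) (h c)) := by
  have hM' : 0 ≤ 2 * (M * dist (h p) (h c)) := by positivity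
  apply heightIn_univ_le hM'
  intro B₁' B₂' B₃' h1' h2' h3' h12' h13' h23'
  have pull : ∀ B' : Set Y, IsBranch (h p) B' → IsBranch p (h.symm '' B') := by
    intro B' hB'
    have := IsBranch.image h.symm hB'
    rwa [h.symm_apply_apply] at this
  have hinj := Set.image_injective.mpr h.symm.injective
  have key : min (Metric.diam (h.symm '' B₁'))
      (min (Metric.diam (h.symm '' B₂')) (Metric.diam (h.symm '' B₃'))) ≤ K * dist p c :=
    (le_heightIn_univ (pull _ h1') (pull _ h2') (pull _ h3')
      (fun e => h12' (hinj e)) (fun e => h13' (hinj e)) (fun e => h23' (hinj e))).trans hH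
  have main : ∀ B' : Set Y, IsBranch (h p) B' →
      Metric.diam (h.symm '' B') ≤ K * dist p c →
      Metric.diam B' ≤ 2 * (M * dist (h p) (h c)) := by
    intro B' hB' hd
    have hpB : p ∈ h.symm '' B' := (pull _ hB').mem_self
    have e1 : ∀ x' ∈ B', dist (h p) x' ≤ M * dist (h p) (h c) := by
      intro x' hx'
      have hx : h.symm x' ∈ h.symm '' B' := Set.mem_image_of_mem _ hx'
      have hdx : dist p (h.symm x') ≤ K * dist p c :=
        (Metric.dist_le_diam_of_mem Metric.isBounded_of_compactSpace hpB hx).trans hd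
      have := himp _ hdx
      rwa [h.apply_symm_apply] at this
    apply Metric.diam_le_of_forall_dist_le hM'
    intro x' hx' y' hy'
    have t1 := e1 x' hx'
    have t2 := e1 y' hy'
    have t3 := dist_triangle x' (h p) y'
    have t4 : dist x' (h p) = dist (h p) x' := dist_comm _ _
    linarith
  rcases min_le_iff.mp key with hc1 | hrest
  · exact (min_le_left _ _).trans (main B₁' h1' hc1)
  · rcases min_le_iff.mp hrest with hc2 | hc3
    · exact ((min_le_right _ _).trans (min_le_left _ _)).trans (main B₂' h2' hc2)
    · exact ((min_le_right _ _).trans (min_le_right _ _)).trans (main B₃' h3' hc3)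

end Height

section Arcs

theorem isArc_image {X Y : Type*} [TopologicalSpace X] [TopologicalSpace Y] {F : X → Y}
    (hc : Continuous F) (hi : Function.Injective F) {A : Set X} {x y : X}
    (h : IsArc A x y) : IsArc (F '' A) (F x) (F y) := by
  rcases h with ⟨rfl, rfl⟩ | ⟨hxy, f, hf, hinj, h0, h1, rfl⟩
  · exact Or.inl ⟨rfl, Set.image_singleton⟩
  · refine Or.inr ⟨fun e => hxy (hi e), F ∘ f, hc.comp_continuousOn hf,
      hi.injOn.comp hinj (Set.mapsTo_univ _ _), ?_, ?_, ?_⟩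
    · simp [Function.comp, h0]
    · simp [Function.comp, h1]
    · rw [Set.image_comp]

theorem treeArc_image {T T' : Type*} [MetricSpace T] [MetricSpace T']
    (hT : IsMetricTree T) (hT' : IsMetricTree T') {F : T → T'}
    (hc : Continuous F) (hi : Function.Injective F) (x y : T) :
    F '' treeArc hT x y = treeArc hT' (F x) (F y) :=
  (hT'.arcUnique (F x) (F y)).choose_spec.2 _
    (isArc_image hc hi (hT.arcUnique x y).choose_spec.1)

theorem treeArc_subset_of_mem {T : Type*} [MetricSpace T] (hT : IsMetricTree T)
    {x y u v : T} (hxy : x ≠ y) (hu : u ∈ treeArc hT x y) (hv : v ∈ treeArc hT x y)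
    (huv : u ≠ v) : treeArc hT u v ⊆ treeArc hT x y := by
  rcases (hT.arcUnique x y).choose_spec.1 with ⟨h, _⟩ | ⟨_, f, hf, hinj, h0, h1, hA⟩
  · exact absurd h hxy
  · rw [show treeArc hT x y = f '' Set.Icc 0 1 from hA] at hu hv ⊢
    obtain ⟨s, hs, rfl⟩ := hu
    obtain ⟨t, ht, rfl⟩ := hv
    have hst : s ≠ t := fun e => huv (by rw [e])
    set φ : ℝ → ℝ := fun r => s + r * (t - s) with hφ
    have hmaps : Set.MapsTo φ (Set.Icc 0 1) (Set.Icc 0 1) := by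
      rintro r ⟨hr0, hr1⟩
      constructor
      · simp only [hφ]
        nlinarith [mul_nonneg (sub_nonneg.mpr hr1) hs.1, mul_nonneg hr0 ht.1]
      · simp only [hφ]
        nlinarith [mul_nonneg (sub_nonneg.mpr hr1) (sub_nonneg.mpr hs.2),
          mul_nonneg hr0 (sub_nonneg.mpr ht.2)]
    have hφinj : Set.InjOn φ (Set.Icc 0 1) := by
      intro a _ b _ hab
      have : a * (t - s) = b * (t - s) := by
        have := hab
        simp only [hφ] at this
        linarith
      exact mul_right_cancel₀ (sub_ne_zero.mpr (Ne.symm hst)) this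
    have hφcont : ContinuousOn φ (Set.Icc 0 1) :=
      ((continuous_const.add (continuous_id.mul continuous_const))).continuousOn
    have harc : IsArc ((f ∘ φ) '' Set.Icc 0 1) (f s) (f t) := by
      refine Or.inr ⟨huv, f ∘ φ, hf.comp hφcont hmaps, hinj.comp hφinj hmaps, ?_, ?_, rfl⟩
      · show f (φ 0) = f s
        congr 1
        simp [hφ]
      · show f (φ 1) = f t
        congr 1
        simp [hφ]
    have heq : (f ∘ φ) '' Set.Icc 0 1 = treeArc hT (f s) (f t) :=
      (hT.arcUnique (f s) (f t)).choose_spec.2 _ harc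
    rw [← heq, Set.image_comp]
    exact Set.image_mono (hmaps.image_subset)

end Arcs

section Continuity

theorem qs_continuous {T T' : Type*} [MetricSpace T] [MetricSpace T'] [Nontrivial T]
    {F : T → T'} (hi : Function.Injective F) {η : ℝ → ℝ} (hη : IsGauge η)
    (hqs : ∀ t : ℝ, 0 < t → ∀ x y z : T,
      dist x y ≤ t * dist x z → dist (F x) (F y) ≤ η t * dist (F x) (F z)) :
    Continuous F := by
  rw [Metric.continuous_iff]
  intro x ε hε
  obtain ⟨z, hz⟩ := exists_ne x
  have hDpos : 0 < dist (F x) (F z) := dist_pos.mpr fun e => hz (hi e.symm)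
  have hdxz : 0 < dist x z := dist_pos.mpr (Ne.symm hz)
  have hcw : ContinuousWithinAt η (Set.Ici 0) 0 := hη.2.2.1 0 Set.self_mem_Ici
  rw [Metric.continuousWithinAt_iff] at hcw
  obtain ⟨δ₀, hδ₀, hball⟩ := hcw (ε / dist (F x) (F z)) (by positivity)
  set t := δ₀ / 2 with htdef
  have ht : 0 < t := half_pos hδ₀
  have hηt : η t < ε / dist (F x) (F z) := by
    have h1 : dist t (0 : ℝ) < δ₀ := by
      rw [Real.dist_eq, sub_zero, abs_of_pos ht]
      simp only [htdef]
      linarith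
    have h2 := hball (Set.mem_Ici.mpr ht.le) h1
    rw [hη.1, Real.dist_eq, sub_zero, abs_of_nonneg (hη.nonneg ht.le)] at h2
    exact h2
  refine ⟨t * dist x z, by positivity, ?_⟩
  intro a ha
  have hle : dist x a ≤ t * dist x z := by
    rw [dist_comm x a]; exact ha.le
  have := hqs t ht x a z hle
  calc dist (F a) (F x) = dist (F x) (F a) := dist_comm _ _
    _ ≤ η t * dist (F x) (F z) := this
    _ < (ε / dist (F x) (F z)) * dist (F x) (F z) :=
        mul_lt_mul_of_pos_right hηt hDpos
    _ = ε := div_mul_cancel₀ ε hDpos.ne'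

end Continuity

theorem stmt16 {T : Type*} {T' : Type*} [MetricSpace T] [MetricSpace T']
    (hT : IsMetricTree T) (hT' : IsMetricTree T') (F : T → T')
    (hbij : Function.Bijective F)
    (η : ℝ → ℝ) (hη : IsGauge η)
    (hqs : ∀ t : ℝ, 0 < t → ∀ x y z : T,
      dist x y ≤ t * dist x z → dist (F x) (F y) ≤ η t * dist (F x) (F z)) :
    (UnifRelSep T → UnifRelSep T') ∧ (UnifRelDense hT → UnifRelDense hT') := by
  haveI := hT.compact
  haveI := hT.conn
  haveI := hT.locConn
  haveI := hT.nontriv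
  haveI := hT'.compact
  haveI := hT'.conn
  haveI := hT'.locConn
  haveI := hT'.nontriv
  have hcont : Continuous F := qs_continuous hbij.injective hη hqs
  let e : T ≃ T' := Equiv.ofBijective F hbij
  have hce : Continuous (⇑e) := hcont
  let h : T ≃ₜ T' := Continuous.homeoOfEquivCompactToT2 (f := e) hce
  have hFh : ∀ z : T, h z = F z := fun _ => rfl
  have hqs' : ∀ t : ℝ, 0 < t → ∀ x y z : T,
      dist x y ≤ t * dist x z → dist (h x) (h y) ≤ η t * dist (h x) (h z) := by
    intro t ht x y z hxy
    rw [hFh, hFh, hFh]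
    exact hqs t ht x y z hxy
  have hη1 : 0 < η 1 := hη.pos one_pos
  -- inverse quasisymmetry instance
  have hinv : ∀ u v w : T, dist (h u) (h v) ≤ (1 / (2 * η 1)) * dist (h u) (h w) →
      dist u v ≤ dist u w := by
    intro u v w hle
    by_contra hgt
    push_neg at hgt
    have h1 : dist u w ≤ 1 * dist u v := by linarith
    have h2 := hqs' 1 one_pos u w v h1
    have h3 : dist (h u) (h w) ≤ η 1 * ((1 / (2 * η 1)) * dist (h u) (h w)) :=
      h2.trans (mul_le_mul_of_nonneg_left hle hη1.le)
    have h4 : η 1 * ((1 / (2 * η 1)) * dist (h u) (h w)) = dist (h u) (h w) / 2 := by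
      field_simp
    rw [h4] at h3
    have h5 : dist (h u) (h w) ≤ 0 := by linarith
    have h6 : dist (h u) (h w) = 0 := le_antisymm h5 dist_nonneg
    rw [h6] at hle
    have h7 : dist (h u) (h v) ≤ 0 := by simpa using hle
    have huv : u = v := h.injective (dist_le_zero.mp h7)
    rw [huv, dist_self] at hgt
    exact (not_lt_of_ge dist_nonneg) hgt
  constructor
  · -- separation
    rintro ⟨C, hC1, hsep⟩
    have hCpos : 0 < C := lt_of_lt_of_le one_pos hC1
    have hηC : 0 ≤ η C := hη.nonneg hCpos.le
    refine ⟨max 1 (2 * η C), le_max_left _ _, ?_⟩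
    intro p' q' hbp' hbq' hne'
    have hmaxpos : (0 : ℝ) < max 1 (2 * η C) := lt_of_lt_of_le one_pos (le_max_left _ _)
    obtain ⟨p, rfl⟩ : ∃ p, p' = h p := ⟨h.symm p', (h.apply_symm_apply p').symm⟩
    obtain ⟨q, rfl⟩ : ∃ q, q' = h q := ⟨h.symm q', (h.apply_symm_apply q').symm⟩
    have hbp : IsBranchPoint p := by
      have := IsBranchPoint.image h.symm hbp'
      rwa [h.symm_apply_apply] at this
    have hbq : IsBranchPoint q := by
      have := IsBranchPoint.image h.symm hbq'
      rwa [h.symm_apply_apply] at this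
    have hpq : p ≠ q := fun e => hne' (congrArg h e)
    have hd := hsep p q hbp hbq hpq
    have hmin : min (treeHeight p) (treeHeight q) ≤ C * dist p q :=
      calc min (treeHeight p) (treeHeight q) ≤ dist p q * C := (div_le_iff₀ hCpos).mp hd
        _ = C * dist p q := mul_comm _ _
    have key : ∀ a b : T, treeHeight a ≤ C * dist a b →
        treeHeight (h a) ≤ 2 * (η C * dist (h a) (h b)) := by
      intro a b hle
      exact height_transfer h a b C (η C) hηC (fun x hx => hqs' C hCpos _ x _ hx) hle
    have final : min (treeHeight (h p)) (treeHeight (h q)) ≤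
        2 * (η C * dist (h p) (h q)) := by
      rcases le_total (treeHeight p) (treeHeight q) with hle | hle
      · have hple : treeHeight p ≤ C * dist p q := by
          rw [min_eq_left hle] at hmin; exact hmin
        exact (min_le_left _ _).trans (key p q hple)
      · have hqle : treeHeight q ≤ C * dist q p := by
          rw [min_eq_right hle] at hmin
          rwa [dist_comm q p]
        refine (min_le_right _ _).trans ((key q p hqle).trans ?_)
        rw [dist_comm (h q) (h p)]
    rw [div_le_iff₀ hmaxpos]
    calc min (treeHeight (h p)) (treeHeight (h q)) ≤ 2 * (η C * dist (h p) (h q)) := final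
      _ = (2 * η C) * dist (h p) (h q) := by ring
      _ ≤ max 1 (2 * η C) * dist (h p) (h q) :=
          mul_le_mul_of_nonneg_right (le_max_right _ _) dist_nonneg
      _ = dist (h p) (h q) * max 1 (2 * η C) := mul_comm _ _
  · -- density
    rintro ⟨C, hC1, hdens⟩
    have hCpos : 0 < C := lt_of_lt_of_le one_pos hC1
    have hD : 0 < η (4 * C) := hη.pos (by linarith)
    refine ⟨max 1 (4 * η 1 * η (4 * C)), le_max_left _ _, ?_⟩
    intro x' y' hxy'
    have hmaxpos : (0 : ℝ) < max 1 (4 * η 1 * η (4 * C)) :=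
      lt_of_lt_of_le one_pos (le_max_left _ _)
    obtain ⟨x, rfl⟩ : ∃ x, x' = h x := ⟨h.symm x', (h.apply_symm_apply x').symm⟩
    obtain ⟨y, rfl⟩ : ∃ y, y' = h y := ⟨h.symm y', (h.apply_symm_apply y').symm⟩
    have hxy : x ≠ y := fun e => hxy' (congrArg h e)
    set A := treeArc hT x y with hAdef
    obtain ⟨f, hf, hfinj, h0, h1, hA⟩ :
        ∃ f : ℝ → T, ContinuousOn f (Set.Icc 0 1) ∧ Set.InjOn f (Set.Icc 0 1) ∧
          f 0 = x ∧ f 1 = y ∧ A = f '' Set.Icc 0 1 := by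
      rcases (hT.arcUnique x y).choose_spec.1 with ⟨e', _⟩ | ⟨_, f, hf, hfinj, h0, h1, hA⟩
      · exact absurd e' hxy
      · exact ⟨f, hf, hfinj, h0, h1, hA⟩
    have hxA : x ∈ A := by
      rw [hA]; exact ⟨0, ⟨le_refl 0, zero_le_one⟩, h0⟩
    have hyA : y ∈ A := by
      rw [hA]; exact ⟨1, ⟨zero_le_one, le_refl 1⟩, h1⟩
    have hAcp : IsCompact A := by
      rw [hA]; exact isCompact_Icc.image_of_continuousOn hf
    obtain ⟨⟨u, v⟩, huvmem, hmax⟩ := (hAcp.prod hAcp).exists_isMaxOn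
      ⟨(x, x), Set.mk_mem_prod hxA hxA⟩
      (continuous_dist.continuousOn : ContinuousOn (fun z : T × T => dist z.1 z.2) _)
    have hu : u ∈ A := huvmem.1
    have hv : v ∈ A := huvmem.2
    have hmax' : ∀ a ∈ A, ∀ b ∈ A, dist a b ≤ dist u v := by
      intro a ha b hb
      exact hmax (Set.mk_mem_prod ha hb)
    have hduv : 0 < dist u v :=
      lt_of_lt_of_le (dist_pos.mpr hxy) (hmax' x hxA y hyA)
    have huvne : u ≠ v := dist_pos.mp hduv
    obtain ⟨p, hpuv, hbp, hph⟩ := hdens u v huvne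
    have hHpos : 0 < treeHeight p :=
      lt_of_lt_of_le (by positivity) hph
    have hpA : p ∈ A := treeArc_subset_of_mem hT hxy hu hv huvne hpuv
    -- pick a point at distance exactly (treeHeight p)/4 from p
    obtain ⟨z₀, hz₀⟩ : ∃ z₀ : T, treeHeight p / 4 < dist p z₀ := by
      by_contra hcon
      push_neg at hcon
      have hdle : Metric.diam (Set.univ : Set T) ≤ treeHeight p / 2 := by
        apply Metric.diam_le_of_forall_dist_le (by positivity)
        intro a _ b _
        have t1 := hcon a
        have t2 := hcon b
        have t3 := dist_triangle a p b
        have t4 : dist a p = dist p a := dist_comm _ _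
        linarith
      have := heightIn_univ_le_diam p
      have hth : treeHeight p ≤ Metric.diam (Set.univ : Set T) := this
      linarith
    obtain ⟨c, hc⟩ : ∃ c : T, dist p c = treeHeight p / 4 := by
      have hpre : IsPreconnected ((fun z : T => dist p z) '' Set.univ) :=
        isPreconnected_univ.image _ (continuous_const.dist continuous_id).continuousOn
      have h0m : (0 : ℝ) ∈ (fun z : T => dist p z) '' Set.univ :=
        ⟨p, trivial, dist_self p⟩
      have hzm : dist p z₀ ∈ (fun z : T => dist p z) '' Set.univ := ⟨z₀, trivial, rfl⟩
      have hsub := hpre.Icc_subset h0m hzm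
      have hmem : treeHeight p / 4 ∈ Set.Icc (0 : ℝ) (dist p z₀) :=
        ⟨by positivity, hz₀.le⟩
      obtain ⟨c, -, hc⟩ := hsub hmem
      exact ⟨c, hc⟩
    -- Step A : lower bound for treeHeight (h p) relative to dist (h p) (h c)
    have hstepA : (1 / (2 * η 1)) * dist (h p) (h c) < treeHeight (h p) := by
      by_contra hcon
      push_neg at hcon
      have himp : ∀ x'' : T', dist (h p) x'' ≤ (1 / (2 * η 1)) * dist (h p) (h c) →
          dist (h.symm (h p)) (h.symm x'') ≤ 1 * dist (h.symm (h p)) (h.symm (h c)) := by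
        intro x'' hx''
        rw [h.symm_apply_apply, one_mul, h.symm_apply_apply]
        apply hinv p (h.symm x'') c
        rw [h.apply_symm_apply]
        exact hx''
      have := height_transfer h.symm (h p) (h c) (1 / (2 * η 1)) 1 zero_le_one himp hcon
      rw [h.symm_apply_apply, h.symm_apply_apply] at this
      have hth : treeHeight p ≤ 2 * (1 * dist p c) := this
      rw [hc] at hth
      linarith
    have hH'nonneg : 0 ≤ treeHeight (h p) :=
      le_of_lt (lt_of_le_of_lt (by positivity) hstepA)
    -- Step B : dist (h p) (h c) is comparable to dist (h x) (h y)
    obtain ⟨w, hwA, hwd⟩ : ∃ w ∈ A, dist (h x) (h y) / 2 ≤ dist (h p) (h w) := by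
      have htri : dist (h x) (h y) ≤ dist (h p) (h x) + dist (h p) (h y) := by
        have := dist_triangle (h x) (h p) (h y)
        have h2 : dist (h x) (h p) = dist (h p) (h x) := dist_comm _ _
        linarith
      rcases le_total (dist (h p) (h x)) (dist (h p) (h y)) with hle | hle
      · exact ⟨y, hyA, by linarith⟩
      · exact ⟨x, hxA, by linarith⟩
    have h9 : dist p w ≤ (4 * C) * dist p c := by
      have h91 : dist p w ≤ dist u v := hmax' p hpA w hwA
      have h92 : dist u v ≤ C * treeHeight p := by
        have := (div_le_iff₀ hCpos).mp hph
        calc dist u v ≤ treeHeight p * C := this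
          _ = C * treeHeight p := mul_comm _ _
      calc dist p w ≤ C * treeHeight p := h91.trans h92
        _ = 4 * C * (treeHeight p / 4) := by ring
        _ = 4 * C * dist p c := by rw [hc]
    have h10 : dist (h p) (h w) ≤ η (4 * C) * dist (h p) (h c) :=
      hqs' (4 * C) (by positivity) p w c h9
    have h12 : dist (h x) (h y) ≤ 2 * η (4 * C) * dist (h p) (h c) := by
      have := hwd.trans h10
      linarith
    -- combine
    have e2 : dist (h p) (h c) ≤ 2 * η 1 * treeHeight (h p) := by
      have h2η1 : (0 : ℝ) < 2 * η 1 := by linarith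
      have hm := mul_le_mul_of_nonneg_left hstepA.le h2η1.le
      have hid : 2 * η 1 * ((1 / (2 * η 1)) * dist (h p) (h c)) = dist (h p) (h c) := by
        field_simp
      rw [hid] at hm
      exact hm
    have hkey : dist (h x) (h y) ≤ (4 * η 1 * η (4 * C)) * treeHeight (h p) := by
      calc dist (h x) (h y) ≤ 2 * η (4 * C) * dist (h p) (h c) := h12
        _ ≤ 2 * η (4 * C) * (2 * η 1 * treeHeight (h p)) :=
            mul_le_mul_of_nonneg_left e2 (by positivity)
        _ = (4 * η 1 * η (4 * C)) * treeHeight (h p) := by ring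
    refine ⟨h p, ?_, IsBranchPoint.image h hbp, ?_⟩
    · have himg : F '' A = treeArc hT' (h x) (h y) :=
        treeArc_image hT hT' hcont hbij.injective x y
      rw [← himg]
      exact ⟨p, hpA, (hFh p).symm⟩
    · rw [div_le_iff₀ hmaxpos]
      calc dist (h x) (h y) ≤ (4 * η 1 * η (4 * C)) * treeHeight (h p) := hkey
        _ ≤ max 1 (4 * η 1 * η (4 * C)) * treeHeight (h p) :=
            mul_le_mul_of_nonneg_right (le_max_right _ _) hH'nonneg
        _ = treeHeight (h p) * max 1 (4 * η 1 * η (4 * C)) := mul_comm _ _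
end
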